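/- arXiv:2007.13125 — 2 statements merged into one kernel-verified Lean document; each statement's English description precedes it below -/
import Mathlib

section
/- There exists a constant c > 0 depending only on α ∈ (0,1) such that for all n ≥ 1 and j ≥ 0, Σ_{i=1}^n (n-i+1)^{α-1} (j+i)^{-1} ≤ c n^{α-1} log(n+1). -/
open Finset Real

/-- Bernoulli-type step: `(t-1)^α ≤ t^α - α t^(α-1)` for `t ≥ 1`, `0 ≤ α ≤ 1`. -/
lemma aux_bernoulli_step {α t : ℝ} (h0 : 0 ≤ α) (h1 : α ≤ 1) (ht : 1 ≤ t) :
    (t - 1) ^ α ≤ t ^ α - α * t ^ (α - 1) := by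
  have htpos : 0 < t := lt_of_lt_of_le one_pos ht
  have hs : -1 ≤ -t⁻¹ := by
    have : t⁻¹ ≤ 1 := inv_le_one_of_one_le₀ ht
    linarith
  have hber := rpow_one_add_le_one_add_mul_self hs h0 h1
  have htti : t * t⁻¹ = 1 := mul_inv_cancel₀ (ne_of_gt htpos)
  have hfac : t - 1 = t * (1 + -t⁻¹) := by linear_combination htti
  have h1t : (0:ℝ) ≤ 1 + -t⁻¹ := by
    have : t⁻¹ ≤ 1 := inv_le_one_of_one_le₀ ht
    linarith
  calc (t - 1) ^ α = t ^ α * (1 + -t⁻¹) ^ α := by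
        rw [hfac, Real.mul_rpow htpos.le h1t]
    _ ≤ t ^ α * (1 + α * -t⁻¹) := by
        apply mul_le_mul_of_nonneg_left hber (Real.rpow_nonneg htpos.le α)
    _ = t ^ α - α * (t ^ α / t) := by ring
    _ = t ^ α - α * t ^ (α - 1) := by
        rw [Real.rpow_sub htpos α 1, Real.rpow_one]

/-- Telescoping bound `∑_{k=1}^n k^(α-1) ≤ n^α / α`. -/
lemma aux_rpow_sum {α : ℝ} (h0 : 0 < α) (h1 : α < 1) (n : ℕ) :
    ∑ k ∈ Finset.Icc 1 n, (k : ℝ) ^ (α - 1) ≤ (n : ℝ) ^ α / α := by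
  induction n with
  | zero => simp [Real.zero_rpow (ne_of_gt h0)]
  | succ n ih =>
    rw [Finset.sum_Icc_succ_top (by omega : 1 ≤ n + 1)]
    have ht : (1:ℝ) ≤ (n:ℝ) + 1 := by
      have : (0:ℝ) ≤ (n:ℝ) := Nat.cast_nonneg n
      linarith
    have key := aux_bernoulli_step h0.le h1.le ht
    have hn1 : ((n+1 : ℕ) : ℝ) = (n:ℝ) + 1 := by push_cast; ring
    have hsub : (n:ℝ) + 1 - 1 = (n:ℝ) := by ring
    rw [hsub] at key
    rw [hn1]
    have : ((n:ℝ)+1) ^ (α - 1) ≤ (((n:ℝ)+1) ^ α - (n:ℝ) ^ α) / α := by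
      rw [le_div_iff₀ h0]
      nlinarith
    calc ∑ k ∈ Finset.Icc 1 n, (k : ℝ) ^ (α - 1) + ((n:ℝ)+1) ^ (α - 1)
        ≤ (n : ℝ) ^ α / α + (((n:ℝ)+1) ^ α - (n:ℝ) ^ α) / α := add_le_add ih this
      _ = ((n:ℝ)+1) ^ α / α := by field_simp; ring

/-- Reflection identity. -/
lemma aux_reflect (α : ℝ) (n : ℕ) :
    ∑ i ∈ Finset.Icc 1 n, ((n : ℝ) - (i : ℝ) + 1) ^ (α - 1)
      = ∑ k ∈ Finset.Icc 1 n, (k : ℝ) ^ (α - 1) := by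
  apply Finset.sum_nbij' (fun i => n + 1 - i) (fun k => n + 1 - k)
  · intro a ha
    simp only [Finset.mem_Icc] at ha ⊢
    omega
  · intro a ha
    simp only [Finset.mem_Icc] at ha ⊢
    omega
  · intro a ha
    simp only [Finset.mem_Icc] at ha
    omega
  · intro a ha
    simp only [Finset.mem_Icc] at ha
    omega
  · intro a ha
    simp only [Finset.mem_Icc] at ha
    congr 1
    have : ((n + 1 - a : ℕ) : ℝ) = (n:ℝ) + 1 - (a:ℝ) := by
      have := ha.2
      push_cast [Nat.cast_sub (by omega : a ≤ n + 1)]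
      ring
    rw [this]; ring

/-- Kernel-summation estimate: Σ_{i=1}^n (n-i+1)^{α-1}(j+i)^{-1} ≤ c n^{α-1} log(n+1). -/
theorem kernel_sum_log_bound (α : ℝ) (hα : α ∈ Set.Ioo (0 : ℝ) 1) :
    ∃ c > 0, ∀ n : ℕ, 1 ≤ n → ∀ j : ℕ,
      ∑ i ∈ Finset.Icc 1 n, ((n : ℝ) - (i : ℝ) + 1) ^ (α - 1) * ((j : ℝ) + (i : ℝ))⁻¹ ≤
        c * (n : ℝ) ^ (α - 1) * Real.log ((n : ℝ) + 1) := by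
  obtain ⟨hα0, hα1⟩ := hα
  refine ⟨3 * 2 ^ (1 - α) + 4 / α, by positivity, ?_⟩
  intro n hn j
  have hnpos : (0:ℝ) < n := by exact_mod_cast hn
  have hn1pos : (0:ℝ) < (n:ℝ) + 1 := by linarith
  set L := Real.log ((n:ℝ) + 1) with hL
  have hlog2 : Real.log 2 ≤ L := Real.log_le_log two_pos (by exact_mod_cast Nat.succ_le_succ hn)
  have hL1 : (1:ℝ) ≤ 2 * L := by
    have := Real.log_two_gt_d9
    linarith
  have hLpos : 0 < L := by
    have := Real.log_two_gt_d9
    linarith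
  set P := (2:ℝ) ^ (1 - α) with hP
  have hPpos : 0 < P := Real.rpow_pos_of_pos two_pos _
  set N := (n:ℝ) ^ (α - 1) with hN
  have hNpos : 0 < N := Real.rpow_pos_of_pos hnpos _
  set N1 := ((n:ℝ) + 1) ^ (α - 1) with hN1
  have hN1N : N1 ≤ N := Real.rpow_le_rpow_of_nonpos hnpos (by linarith) (by linarith)
  have hN1pos : 0 < N1 := Real.rpow_pos_of_pos hn1pos _
  -- per-term splitting
  have hsplit : ∀ i ∈ Finset.Icc 1 n,
      ((n : ℝ) - (i : ℝ) + 1) ^ (α - 1) * ((j : ℝ) + (i : ℝ))⁻¹ ≤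
        P * N1 * (i:ℝ)⁻¹ + 2 / ((n:ℝ) + 1) * ((n : ℝ) - (i : ℝ) + 1) ^ (α - 1) := by
    intro i hi
    rw [Finset.mem_Icc] at hi
    have hi1 : (1:ℝ) ≤ i := by exact_mod_cast hi.1
    have hipos : (0:ℝ) < i := by linarith
    have hin : (i:ℝ) ≤ n := by exact_mod_cast hi.2
    set A := (n : ℝ) - (i : ℝ) + 1 with hA
    have hApos : 0 < A := by simp only [hA]; linarith
    have hAnn : 0 ≤ A ^ (α - 1) := Real.rpow_nonneg hApos.le _
    have hji : ((j:ℝ) + (i:ℝ))⁻¹ ≤ (i:ℝ)⁻¹ := by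
      apply inv_anti₀ hipos
      have : (0:ℝ) ≤ j := Nat.cast_nonneg j
      linarith
    have step1 : A ^ (α - 1) * ((j : ℝ) + (i : ℝ))⁻¹ ≤ A ^ (α - 1) * (i:ℝ)⁻¹ :=
      mul_le_mul_of_nonneg_left hji hAnn
    rcases le_or_gt ((n:ℝ) + 1) (2 * i) with h | h
    · -- i large: 1/i ≤ 2/(n+1)
      have hhalf : ((n:ℝ)+1)/2 ≤ i := by linarith
      have hinv : (i:ℝ)⁻¹ ≤ 2 / ((n:ℝ)+1) := by
        have := inv_anti₀ (by positivity : (0:ℝ) < ((n:ℝ)+1)/2) hhalf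
        rwa [inv_div] at this
      have : A ^ (α - 1) * (i:ℝ)⁻¹ ≤ 2 / ((n:ℝ)+1) * A ^ (α - 1) := by
        calc A ^ (α - 1) * (i:ℝ)⁻¹ ≤ A ^ (α - 1) * (2 / ((n:ℝ)+1)) :=
              mul_le_mul_of_nonneg_left hinv hAnn
          _ = 2 / ((n:ℝ)+1) * A ^ (α - 1) := by ring
      have hfirst : 0 ≤ P * N1 * (i:ℝ)⁻¹ := by positivity
      linarith
    · -- A large: A ≥ (n+1)/2
      have hhalf : ((n:ℝ)+1)/2 ≤ A := by simp only [hA]; linarith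
      have hArp : A ^ (α - 1) ≤ (((n:ℝ)+1)/2) ^ (α - 1) :=
        Real.rpow_le_rpow_of_nonpos (by positivity) hhalf (by linarith)
      have hPN1 : (((n:ℝ)+1)/2) ^ (α - 1) = P * N1 := by
        rw [Real.div_rpow hn1pos.le (by norm_num : (0:ℝ) ≤ 2), div_eq_mul_inv,
          ← Real.rpow_neg (by norm_num : (0:ℝ) ≤ 2), neg_sub]
        ring
      have : A ^ (α - 1) * (i:ℝ)⁻¹ ≤ P * N1 * (i:ℝ)⁻¹ := by
        apply mul_le_mul_of_nonneg_right _ (by positivity)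
        rw [← hPN1]; exact hArp
      have hsecond : 0 ≤ 2 / ((n:ℝ)+1) * A ^ (α - 1) := by positivity
      linarith
  -- sum up
  have hsum := Finset.sum_le_sum hsplit
  rw [Finset.sum_add_distrib, ← Finset.mul_sum, ← Finset.mul_sum] at hsum
  -- harmonic bound
  have hH : ∑ i ∈ Finset.Icc 1 n, (i:ℝ)⁻¹ ≤ 3 * L := by
    have h1 : ((harmonic n : ℚ) : ℝ) = ∑ i ∈ Finset.Icc 1 n, (i:ℝ)⁻¹ := by
      rw [harmonic_eq_sum_Icc]; push_cast; ring
    have h2 := harmonic_le_one_add_log n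
    have h3 : Real.log n ≤ L := Real.log_le_log hnpos (by linarith)
    rw [h1] at h2
    linarith
  -- rpow sum bound
  have hT : ∑ i ∈ Finset.Icc 1 n, ((n : ℝ) - (i : ℝ) + 1) ^ (α - 1) ≤ (n:ℝ) ^ α / α := by
    rw [aux_reflect]
    exact aux_rpow_sum hα0 hα1 n
  have hTnn : 0 ≤ ∑ i ∈ Finset.Icc 1 n, ((n : ℝ) - (i : ℝ) + 1) ^ (α - 1) :=
    Finset.sum_nonneg fun i hi => by
      rw [Finset.mem_Icc] at hi
      have : (i:ℝ) ≤ n := by exact_mod_cast hi.2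
      apply Real.rpow_nonneg
      linarith
  -- assemble
  have hfirst : P * N1 * (∑ i ∈ Finset.Icc 1 n, (i:ℝ)⁻¹) ≤ 3 * (P * N * L) := by
    calc P * N1 * (∑ i ∈ Finset.Icc 1 n, (i:ℝ)⁻¹) ≤ P * N * (3 * L) := by
          apply mul_le_mul (mul_le_mul_of_nonneg_left hN1N hPpos.le) hH
          · exact Finset.sum_nonneg fun i hi => by positivity
          · positivity
      _ = 3 * (P * N * L) := by ring
  have hNeq : (n:ℝ) ^ α / (n:ℝ) = N := by
    rw [hN, Real.rpow_sub hnpos, Real.rpow_one]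
  have hsecond : 2 / ((n:ℝ)+1) * (∑ i ∈ Finset.Icc 1 n, ((n : ℝ) - (i : ℝ) + 1) ^ (α - 1)) ≤
      4 / α * (N * L) := by
    calc 2 / ((n:ℝ)+1) * (∑ i ∈ Finset.Icc 1 n, ((n : ℝ) - (i : ℝ) + 1) ^ (α - 1))
        ≤ 2 / (n:ℝ) * ((n:ℝ) ^ α / α) := by
          apply mul_le_mul _ hT hTnn (by positivity)
          apply div_le_div_of_nonneg_left (by norm_num) hnpos (by linarith)
      _ = 2 / α * ((n:ℝ) ^ α / (n:ℝ)) := by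
          field_simp
      _ = 2 / α * N := by rw [hNeq]
      _ ≤ 2 / α * (N * (2 * L)) := by
          apply mul_le_mul_of_nonneg_left _ (by positivity)
          exact le_mul_of_one_le_right hNpos.le hL1
      _ = 4 / α * (N * L) := by ring
  calc ∑ i ∈ Finset.Icc 1 n, ((n : ℝ) - (i : ℝ) + 1) ^ (α - 1) * ((j : ℝ) + (i : ℝ))⁻¹
      ≤ P * N1 * (∑ i ∈ Finset.Icc 1 n, (i:ℝ)⁻¹)
        + 2 / ((n:ℝ)+1) * (∑ i ∈ Finset.Icc 1 n, ((n : ℝ) - (i : ℝ) + 1) ^ (α - 1)) := hsum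
    _ ≤ 3 * (P * N * L) + 4 / α * (N * L) := add_le_add hfirst hsecond
    _ = (3 * 2 ^ (1 - α) + 4 / α) * (n : ℝ) ^ (α - 1) * L := by rw [hP, hN]; ring
end

section
/- For every α ∈ (0,1) and every integer N ≥ 1, Σ_{n=1}^N (N-n+1)^{-α} n^{α-1} ≤ B(α, 1-α), where B is the Beta function. -/
open MeasureTheory Set intervalIntegral

/-- The beta-type integrand is interval integrable on `[0,1]`. -/
lemma beta_integrable {α : ℝ} (h0 : 0 < α) (h1 : α < 1) :
    IntervalIntegrable (fun u : ℝ => (1 - u) ^ (-α) * u ^ (α - 1)) volume 0 1 := by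
  have hL : IntervalIntegrable (fun u : ℝ => (1 - u) ^ (-α) * u ^ (α - 1)) volume 0 (1/2) := by
    have hi : IntervalIntegrable (fun u : ℝ => u ^ (α - 1)) volume 0 (1/2) :=
      intervalIntegrable_rpow' (by linarith)
    have hc : ContinuousOn (fun u : ℝ => (1 - u) ^ (-α)) (Set.uIcc 0 (1/2)) := by
      apply ContinuousOn.rpow_const (by fun_prop)
      intro x hx
      rw [Set.uIcc_of_le (by norm_num)] at hx
      refine Or.inl fun h => ?_
      nlinarith [hx.2]
    exact hi.continuousOn_mul hc
  have hR : IntervalIntegrable (fun u : ℝ => (1 - u) ^ (-α) * u ^ (α - 1)) volume (1/2) 1 := by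
    have hi0 : IntervalIntegrable (fun u : ℝ => u ^ (-α)) volume 0 (1/2) :=
      intervalIntegrable_rpow' (by linarith)
    have hi : IntervalIntegrable (fun u : ℝ => (1 - u) ^ (-α)) volume (1/2) 1 := by
      have h := (hi0.comp_sub_left 1).symm
      norm_num at h
      exact h
    have hc : ContinuousOn (fun u : ℝ => u ^ (α - 1)) (Set.uIcc (1/2) 1) := by
      apply ContinuousOn.rpow_const continuousOn_id
      intro x hx
      rw [Set.uIcc_of_le (by norm_num)] at hx
      refine Or.inl fun h => ?_
      simp only [id_eq] at h
      nlinarith [hx.1]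
    exact hi.mul_continuousOn hc
  exact hL.trans hR

/-- The discrete convolution sum is bounded by the Beta function B(α, 1-α). -/
theorem sum_le_beta (α : ℝ) (hα : α ∈ Set.Ioo (0 : ℝ) 1) (N : ℕ) (hN : 1 ≤ N) :
    ∑ n ∈ Finset.Icc 1 N, ((N : ℝ) - (n : ℝ) + 1) ^ (-α) * (n : ℝ) ^ (α - 1) ≤
      ∫ s in (0 : ℝ)..1, (1 - s) ^ (-α) * s ^ (α - 1) := by
  obtain ⟨h0, h1⟩ := hα
  set f : ℝ → ℝ := fun u => (1 - u) ^ (-α) * u ^ (α - 1) with hfdef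
  have hNpos : (0:ℝ) < N := by exact_mod_cast hN
  have hint : IntervalIntegrable f volume 0 1 := beta_integrable h0 h1
  -- integrability on subintervals
  have hsub : ∀ k : ℕ, k < N →
      IntervalIntegrable f volume ((k:ℝ)/N) (((k:ℝ)+1)/N) := by
    intro k hk
    have hk1 : (k:ℝ) + 1 ≤ N := by exact_mod_cast hk
    have hle : (k:ℝ)/N ≤ ((k:ℝ)+1)/N := (div_le_div_iff_of_pos_right hNpos).2 (by linarith)
    apply hint.mono_set
    rw [Set.uIcc_of_le hle, Set.uIcc_of_le (by norm_num : (0:ℝ) ≤ 1)]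
    apply Set.Icc_subset_Icc (by positivity)
    rw [div_le_one hNpos]; linarith
  -- decompose integral
  have hdecomp : ∑ k ∈ Finset.range N,
      (∫ u in ((k:ℝ)/N)..(((k:ℝ)+1)/N), f u) = ∫ u in (0:ℝ)..1, f u := by
    have h := intervalIntegral.sum_integral_adjacent_intervals
      (a := fun k : ℕ => (k:ℝ)/N) (μ := volume) (f := f)
      (n := N) (fun k hk => by push_cast; exact hsub k hk)
    simp only [Nat.cast_zero, zero_div] at h
    rw [div_self (ne_of_gt hNpos)] at h
    rw [← h]
    exact Finset.sum_congr rfl fun k _ => by push_cast; rfl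
  -- termwise bound
  have hterm : ∀ k : ℕ, k < N →
      ((N : ℝ) - ((1 + k : ℕ) : ℝ) + 1) ^ (-α) * (((1 + k : ℕ) : ℝ)) ^ (α - 1) ≤
        ∫ u in ((k:ℝ)/N)..(((k:ℝ)+1)/N), f u := by
    intro k hk
    have hk1 : (k:ℝ) + 1 ≤ N := by exact_mod_cast hk
    have hNk : (0:ℝ) < (N:ℝ) - k := by linarith
    have hle : (k:ℝ)/N ≤ ((k:ℝ)+1)/N := (div_le_div_iff_of_pos_right hNpos).2 (by linarith)
    set c : ℝ := (((N:ℝ) - k)/N) ^ (-α) * (((k:ℝ)+1)/N) ^ (α - 1) with hcdef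
    have hterm_eq : ((N : ℝ) - ((1 + k : ℕ) : ℝ) + 1) ^ (-α) * (((1 + k : ℕ) : ℝ)) ^ (α - 1)
        = c * (1/N) := by
      have e1 : ((N : ℝ) - ((1 + k : ℕ) : ℝ) + 1) = (N:ℝ) - k := by push_cast; ring
      have e2 : (((1 + k : ℕ) : ℝ)) = (k:ℝ) + 1 := by push_cast; ring
      have hone : (N:ℝ)^(-α) * (N:ℝ)^(α-1) * N = 1 := by
        rw [← Real.rpow_add hNpos, show -α + (α-1) = -1 by ring, Real.rpow_neg_one]
        field_simp
      rw [e1, e2, hcdef, Real.div_rpow hNk.le hNpos.le,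
        Real.div_rpow (by positivity : (0:ℝ) ≤ (k:ℝ)+1) hNpos.le, eq_comm]
      calc ((N:ℝ) - k)^(-α) / (N:ℝ)^(-α) * (((k:ℝ)+1)^(α-1) / (N:ℝ)^(α-1)) * (1/N)
          = (((N:ℝ) - k)^(-α) * ((k:ℝ)+1)^(α-1)) * ((N:ℝ)^(-α) * (N:ℝ)^(α-1) * N)⁻¹ := by
            ring
        _ = ((N:ℝ) - k)^(-α) * ((k:ℝ)+1)^(α-1) := by rw [hone]; simp
    have hconst : (∫ _ in ((k:ℝ)/N)..(((k:ℝ)+1)/N), c) = c * (1/N) := by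
      rw [intervalIntegral.integral_const, smul_eq_mul]
      have : ((k:ℝ)+1)/N - (k:ℝ)/N = 1/N := by field_simp; ring
      rw [this]; ring
    have hae : (fun _ : ℝ => c) ≤ᵐ[volume.restrict (Icc ((k:ℝ)/N) (((k:ℝ)+1)/N))] f := by
      have h0' : ∀ᵐ u : ℝ ∂volume, u ≠ 0 := by
        rw [MeasureTheory.ae_iff]
        simpa using Real.volume_singleton
      have h1' : ∀ᵐ u : ℝ ∂volume, u ≠ 1 := by
        rw [MeasureTheory.ae_iff]
        simpa using Real.volume_singleton
      rw [Filter.EventuallyLE, ae_restrict_iff' measurableSet_Icc]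
      filter_upwards [h0', h1'] with u hu0 hu1 hu
      have hu0' : 0 < u := lt_of_le_of_ne (le_trans (by positivity) hu.1) (Ne.symm hu0)
      have hu1' : u < 1 := lt_of_le_of_ne (le_trans hu.2 (by rw [div_le_one hNpos]; linarith)) hu1
      have h1u : 0 < 1 - u := by linarith
      have hA : (((N:ℝ)-k)/N)^(-α) ≤ (1-u)^(-α) := by
        apply Real.rpow_le_rpow_of_nonpos h1u ?_ (by linarith)
        rw [le_div_iff₀ hNpos]
        have h' := hu.1
        rw [div_le_iff₀ hNpos] at h'
        nlinarith
      have hB : (((k:ℝ)+1)/N)^(α-1) ≤ u^(α-1) :=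
        Real.rpow_le_rpow_of_nonpos hu0' hu.2 (by linarith)
      simp only [hfdef]
      exact mul_le_mul hA hB (Real.rpow_nonneg (by positivity) _) (Real.rpow_nonneg h1u.le _)
    calc ((N : ℝ) - ((1 + k : ℕ) : ℝ) + 1) ^ (-α) * (((1 + k : ℕ) : ℝ)) ^ (α - 1)
        = c * (1/N) := hterm_eq
      _ = ∫ _ in ((k:ℝ)/N)..(((k:ℝ)+1)/N), c := hconst.symm
      _ ≤ ∫ u in ((k:ℝ)/N)..(((k:ℝ)+1)/N), f u :=
          intervalIntegral.integral_mono_ae_restrict hle intervalIntegrable_const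
            (hsub k hk) hae
  calc ∑ n ∈ Finset.Icc 1 N, ((N : ℝ) - (n : ℝ) + 1) ^ (-α) * (n : ℝ) ^ (α - 1)
      = ∑ k ∈ Finset.range N,
          ((N : ℝ) - ((1 + k : ℕ) : ℝ) + 1) ^ (-α) * (((1 + k : ℕ) : ℝ)) ^ (α - 1) := by
        rw [← Finset.Ico_add_one_right_eq_Icc, Finset.sum_Ico_eq_sum_range]
        simp
    _ ≤ ∑ k ∈ Finset.range N, ∫ u in ((k:ℝ)/N)..(((k:ℝ)+1)/N), f u :=
        Finset.sum_le_sum fun k hk => hterm k (Finset.mem_range.mp hk)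
    _ = ∫ u in (0:ℝ)..1, f u := hdecomp
end
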